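/- arXiv:0810.0111 — 3 statements merged into one kernel-verified Lean document; each statement's English description precedes it below -/
import Mathlib

section
/- Let v, w ∈ ℤ^n and let T ∈ GL_{n+1}(ℤ) satisfy T·[[1, vᵀ],[0, I_n]] = [[1, wᵀ],[0, I_n]]·T (block matrix notation, with the top-left block 1×1). Then there exists a matrix X ∈ GL_n(ℤ), depending only on T, such that v = X·w. -/
/-- The `(n+1)×(n+1)` unipotent integer matrix `[[1, vᵀ],[0, I_n]]` whose first row is
`(1, v_1, ..., v_n)` and whose remaining rows form `(0 | I_n)`. -/
def uniMat (n : ℕ) (v : Fin n → ℤ) : Matrix (Fin 1 ⊕ Fin n) (Fin 1 ⊕ Fin n) ℤ :=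
  Matrix.fromBlocks 1 (Matrix.of fun _ j => v j) 0 1

/-- if `T ∈ GL_{n+1}(ℤ)` satisfies `T·[[1,vᵀ],[0,I_n]] = [[1,wᵀ],[0,I_n]]·T`,
then there is `X ∈ GL_n(ℤ)`, depending only on `T`, with `v = X·w`. -/
theorem stmt_4 (n : ℕ) (T : Matrix (Fin 1 ⊕ Fin n) (Fin 1 ⊕ Fin n) ℤ)
    (hT : IsUnit T.det) :
    ∃ X : Matrix (Fin n) (Fin n) ℤ, IsUnit X.det ∧
      ∀ v w : Fin n → ℤ, T * uniMat n v = uniMat n w * T → v = X.mulVec w := by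
  classical
  by_cases hc : ∀ i, T (.inr i) (.inl 0) = 0
  · -- block upper triangular case
    have hz : T.toBlocks₂₁ = 0 := by
      ext i j
      simp [Matrix.toBlocks₂₁, Fin.eq_zero j, hc i]
    have hTb : T = Matrix.fromBlocks T.toBlocks₁₁ T.toBlocks₁₂ 0 T.toBlocks₂₂ := by
      conv_lhs => rw [← Matrix.fromBlocks_toBlocks T, hz]
    set a := T (.inl 0) (.inl 0) with ha_def
    have hdet : IsUnit (a * T.toBlocks₂₂.det) := by
      have : T.det = a * T.toBlocks₂₂.det := by
        conv_lhs => rw [hTb]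
        rw [Matrix.det_fromBlocks_zero₂₁, Matrix.det_fin_one]
        rfl
      rwa [this] at hT
    have ha : IsUnit a := isUnit_of_mul_isUnit_left hdet
    have hD : IsUnit T.toBlocks₂₂.det := isUnit_of_mul_isUnit_right hdet
    have ha2 : a * a = 1 := by
      rcases Int.isUnit_iff.mp ha with h | h <;> rw [h] <;> ring
    refine ⟨a • T.toBlocks₂₂.transpose, ?_, ?_⟩
    · rw [Matrix.det_smul, Matrix.det_transpose, Fintype.card_fin]
      exact (ha.pow n).mul hD
    · intro v w hE
      funext j
      have h1 := congrFun (congrFun hE (.inl 0)) (.inr j)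
      simp [uniMat, Matrix.mul_apply, Fintype.sum_sum_type, Matrix.one_apply, mul_ite,
        Finset.sum_ite_eq', Fin.sum_univ_one] at h1
      -- h1 : a * v j + T (inl 0)(inr j) = T (inl 0)(inr j) + ∑ x, w x * T (inr x)(inr j)
      have key : a * v j = ∑ x : Fin n, w x * T (.inr x) (.inr j) := by linarith
      have : (a • T.toBlocks₂₂.transpose).mulVec w j
          = a * ∑ x : Fin n, w x * T (.inr x) (.inr j) := by
        simp [Matrix.mulVec, dotProduct, Matrix.toBlocks₂₂, Finset.mul_sum]
        congr 1; ext x; ring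
      rw [this, ← key, ← mul_assoc, ha2, one_mul]
  · push_neg at hc
    obtain ⟨i₀, hi₀⟩ := hc
    refine ⟨1, by simp, ?_⟩
    intro v w hE
    have hv : v = 0 := by
      funext j
      have h3 := congrFun (congrFun hE (.inr i₀)) (.inr j)
      simp [uniMat, Matrix.mul_apply, Fintype.sum_sum_type, Matrix.one_apply, mul_ite,
        Finset.sum_ite_eq', Fin.sum_univ_one] at h3
      rcases h3 with h | h
      · exact absurd h hi₀
      · exact h
    have hw : w = 0 := by
      have hu : Matrix.vecMul (Sum.elim 0 w) T = 0 := by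
        funext q
        rcases q with q | j
        · have h2 := congrFun (congrFun hE (.inl 0)) (.inl 0)
          simp [uniMat, Matrix.mul_apply, Fintype.sum_sum_type, Matrix.one_apply, mul_ite,
            Finset.sum_ite_eq', Fin.sum_univ_one] at h2
          simpa [Matrix.vecMul, dotProduct, Fintype.sum_sum_type,
            Fin.sum_univ_one, Fin.eq_zero q] using h2
        · have h1 := congrFun (congrFun hE (.inl 0)) (.inr j)
          simp [uniMat, Matrix.mul_apply, Fintype.sum_sum_type, Matrix.one_apply, mul_ite,
            Finset.sum_ite_eq', Fin.sum_univ_one, hv] at h1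
          simpa [Matrix.vecMul, dotProduct, Fintype.sum_sum_type,
            Fin.sum_univ_one] using h1
      have hinv : Matrix.vecMul (Matrix.vecMul (Sum.elim 0 w) T) T⁻¹
          = Matrix.vecMul (0 : (Fin 1 ⊕ Fin n) → ℤ) T⁻¹ := by rw [hu]
      rw [Matrix.vecMul_vecMul, Matrix.mul_nonsing_inv T hT, Matrix.vecMul_one,
        Matrix.zero_vecMul] at hinv
      funext k
      exact congrFun hinv (.inr k)
    subst hv hw
    simp
end

section
/- Every 2-cocycle ω: ℤ^n × ℤ^n → 𝕋 is cohomologous to a cocycle of the form ω_Θ(m,l) = exp(2πi⟨Θm, l⟩) for some strictly upper triangular real n×n matrix Θ; moreover, ω_Θ and ω_{Θ'} are cohomologous if and only if Θ - Θ' has integer entries. -/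
open scoped Real

/-- A (normalized) 2-cocycle on `ℤ^n` with values in the circle group `𝕋`. -/
def IsCocycle (n : ℕ) (ω : (Fin n → ℤ) → (Fin n → ℤ) → Circle) : Prop :=
  (∀ m l k : Fin n → ℤ, ω m l * ω (m + l) k = ω m (l + k) * ω l k) ∧
  (∀ m : Fin n → ℤ, ω m 0 = 1 ∧ ω 0 m = 1)

/-- Two cocycles are cohomologous if they differ by the coboundary
`(m,l) ↦ b(m)b(l)b(m+l)⁻¹` of some `b : ℤ^n → 𝕋`. -/
def Cohomologous (n : ℕ) (ω ω' : (Fin n → ℤ) → (Fin n → ℤ) → Circle) : Prop :=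
  ∃ b : (Fin n → ℤ) → Circle, ∀ m l : Fin n → ℤ,
    ω m l = ω' m l * (b m * b l * (b (m + l))⁻¹)

/-- The cocycle `ω_Θ(m,l) = exp(2πi⟨Θm, l⟩)` attached to a real matrix `Θ`. -/
noncomputable def omegaTheta (n : ℕ) (Θ : Matrix (Fin n) (Fin n) ℝ)
    (m l : Fin n → ℤ) : Circle :=
  Circle.exp (2 * π * ∑ i, (Θ.mulVec fun j => (m j : ℝ)) i * (l i : ℝ))

/-- `Θ` is strictly upper triangular. -/
def StrictUpper (n : ℕ) (Θ : Matrix (Fin n) (Fin n) ℝ) : Prop :=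
  ∀ i j : Fin n, j ≤ i → Θ i j = 0

/-! ### Auxiliary material -/

namespace Stmt12Aux

variable {n : ℕ}

/-- Multiplicativity of the antisymmetrization of a 2-cocycle. -/
lemma antisym_mul (ω : (Fin n → ℤ) → (Fin n → ℤ) → Circle)
    (hc : ∀ m l k, ω m l * ω (m + l) k = ω m (l + k) * ω l k)
    (m l k : Fin n → ℤ) :
    ω m (l + k) / ω (l + k) m = (ω m l / ω l m) * (ω m k / ω k m) := by
  rw [div_mul_div_comm, div_eq_div_iff_mul_eq_mul]
  have h1 := hc m l k
  have h2 := hc l k m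
  have h3 := hc l m k
  rw [add_comm l m, add_comm m k] at h3
  have key : ω m (l + k) * (ω l m * ω k m) * ω l k
      = ω m l * ω m k * ω (l + k) m * ω l k := by
    rw [Circle.ext_iff] at h1 h2 h3 ⊢
    push_cast at h1 h2 h3 ⊢
    linear_combination (-((ω l m : ℂ) * ω k m)) * h1 + ((ω m l : ℂ) * ω k m) * h3
      - ((ω m l : ℂ) * ω m k) * h2
  exact mul_right_cancel key

/-- A multiplicative map on `ℤ^n` which is `1` on the generators is trivial. -/
lemma hom_eq_one (f : (Fin n → ℤ) → Circle)
    (hf : ∀ a b, f (a + b) = f a * f b)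
    (h1 : ∀ j, f (Pi.single j 1) = 1) (m : Fin n → ℤ) : f m = 1 := by
  let F : (Fin n → ℤ) →+ Additive Circle :=
    AddMonoidHom.mk' (fun m => Additive.ofMul (f m)) hf
  have hm : m = ∑ j, Pi.single j (m j) := (Finset.univ_sum_single m).symm
  have : F m = 0 := by
    rw [hm, map_sum]
    refine Finset.sum_eq_zero fun j _ => ?_
    have hsingle : Pi.single j (m j) = m j • (Pi.single j (1 : ℤ) : Fin n → ℤ) := by
      funext i
      by_cases h : i = j <;> simp [h, Pi.single_apply]
    rw [hsingle, map_zsmul]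
    have : F (Pi.single j 1) = 0 := by
      show Additive.ofMul (f (Pi.single j 1)) = 0
      rw [h1 j]; rfl
    rw [this, smul_zero]
  exact congrArg Additive.toMul this

/-- Data of a symmetric normalized 2-cocycle. -/
structure SymCocycleAux (n : ℕ) where
  ω : (Fin n → ℤ) → (Fin n → ℤ) → Circle
  hc : ∀ m l k, ω m l * ω (m + l) k = ω m (l + k) * ω l k
  hn0 : ∀ m, ω m 0 = 1
  h0n : ∀ m, ω 0 m = 1
  hs : ∀ m l, ω m l = ω l m

/-- The central extension attached to a symmetric cocycle. -/
@[ext]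
structure ExtAux {n : ℕ} (d : SymCocycleAux n) where
  z : Circle
  v : Fin n → ℤ

namespace ExtAux

variable {d : SymCocycleAux n}

noncomputable instance : CommGroup (ExtAux d) where
  mul x y := ⟨x.z * y.z * d.ω x.v y.v, x.v + y.v⟩
  one := ⟨1, 0⟩
  inv x := ⟨(x.z * d.ω x.v (-x.v))⁻¹, -x.v⟩
  mul_assoc x y z := by
    have h := d.hc x.v y.v z.v
    rw [Circle.ext_iff] at h
    push_cast at h
    refine ExtAux.ext ?_ ?_
    · rw [Circle.ext_iff]
      show ((x.z * y.z * d.ω x.v y.v * z.z * d.ω (x.v + y.v) z.v : Circle) : ℂ)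
        = ((x.z * (y.z * z.z * d.ω y.v z.v) * d.ω x.v (y.v + z.v) : Circle) : ℂ)
      push_cast
      linear_combination ((x.z : ℂ) * y.z * z.z) * h
    · exact add_assoc _ _ _
  one_mul x := by
    refine ExtAux.ext ?_ ?_
    · show 1 * x.z * d.ω 0 x.v = x.z
      rw [d.h0n, one_mul, mul_one]
    · exact zero_add _
  mul_one x := by
    refine ExtAux.ext ?_ ?_
    · show x.z * 1 * d.ω x.v 0 = x.z
      rw [d.hn0, mul_one, mul_one]
    · exact add_zero _
  inv_mul_cancel x := by
    refine ExtAux.ext ?_ ?_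
    · show (x.z * d.ω x.v (-x.v))⁻¹ * x.z * d.ω (-x.v) x.v = 1
      rw [d.hs (-x.v) x.v, mul_assoc, inv_mul_cancel]
    · exact neg_add_cancel _
  mul_comm x y := by
    refine ExtAux.ext ?_ ?_
    · show x.z * y.z * d.ω x.v y.v = y.z * x.z * d.ω y.v x.v
      rw [d.hs, mul_comm x.z]
    · exact add_comm _ _

@[simp] lemma mul_z (x y : ExtAux d) : (x * y).z = x.z * y.z * d.ω x.v y.v := rfl
@[simp] lemma mul_v (x y : ExtAux d) : (x * y).v = x.v + y.v := rfl

/-- The second-component homomorphism. -/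
noncomputable def vHom : ExtAux d →* Multiplicative (Fin n → ℤ) where
  toFun x := Multiplicative.ofAdd x.v
  map_one' := rfl
  map_mul' _ _ := rfl

/-- The canonical section. -/
noncomputable def s (m : Fin n → ℤ) : ExtAux d :=
  ∏ i, (ExtAux.mk (d := d) 1 (Pi.single i 1)) ^ (m i)

lemma s_v (m : Fin n → ℤ) : (s (d := d) m).v = m := by
  have : Multiplicative.ofAdd ((s (d := d) m).v) = Multiplicative.ofAdd m := by
    show vHom (s m) = _
    rw [s, map_prod]
    simp only [map_zpow]
    have : ∀ i : Fin n, vHom (ExtAux.mk (d := d) 1 (Pi.single i 1))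
        = Multiplicative.ofAdd (Pi.single i 1) := fun i => rfl
    simp only [this, ← ofAdd_zsmul, ← ofAdd_sum]
    congr 1
    funext i
    simp [Finset.sum_apply, Pi.single_apply]
  exact congrArg Multiplicative.toAdd this

lemma s_add (m l : Fin n → ℤ) : s (d := d) (m + l) = s m * s l := by
  rw [s, s, s, ← Finset.prod_mul_distrib]
  refine Finset.prod_congr rfl fun i _ => ?_
  rw [Pi.add_apply, zpow_add]

lemma cobound (m l : Fin n → ℤ) :
    d.ω m l = (s (d := d) m).z⁻¹ * (s (d := d) l).z⁻¹ * (s (d := d) (m + l)).z := by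
  have h := congrArg ExtAux.z (s_add (d := d) m l)
  rw [mul_z, s_v, s_v] at h
  rw [h, ← mul_inv_rev, ← mul_assoc, mul_comm (s (d := d) m).z (s (d := d) l).z,
    inv_mul_cancel, one_mul]

end ExtAux

/-! ### The bilinear form of `omegaTheta` -/

def Bform (Θ : Matrix (Fin n) (Fin n) ℝ) (m l : Fin n → ℤ) : ℝ :=
  ∑ i, (Θ.mulVec fun j => (m j : ℝ)) i * (l i : ℝ)

lemma omegaTheta_eq (Θ : Matrix (Fin n) (Fin n) ℝ) (m l : Fin n → ℤ) :
    omegaTheta n Θ m l = Circle.exp (2 * π * Bform Θ m l) := rfl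

lemma cast_add (m l : Fin n → ℤ) :
    (fun j => (((m + l) j : ℤ) : ℝ)) = (fun j => (m j : ℝ)) + (fun j => (l j : ℝ)) := by
  funext j; simp

lemma cast_single (a : Fin n) :
    (fun j => (((Pi.single a 1 : Fin n → ℤ)) j : ℝ)) = (Pi.single a 1 : Fin n → ℝ) := by
  funext j
  by_cases h : j = a <;> simp [h, Pi.single_apply]

lemma Bform_add_left (Θ : Matrix (Fin n) (Fin n) ℝ) (m l k : Fin n → ℤ) :
    Bform Θ (m + l) k = Bform Θ m k + Bform Θ l k := by
  unfold Bform
  rw [cast_add, Matrix.mulVec_add, ← Finset.sum_add_distrib]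
  exact Finset.sum_congr rfl fun i _ => by simp [add_mul]

lemma Bform_add_right (Θ : Matrix (Fin n) (Fin n) ℝ) (m l k : Fin n → ℤ) :
    Bform Θ m (l + k) = Bform Θ m l + Bform Θ m k := by
  unfold Bform
  rw [← Finset.sum_add_distrib]
  refine Finset.sum_congr rfl fun i _ => ?_
  have : (((l + k) i : ℤ) : ℝ) = (l i : ℝ) + (k i : ℝ) := by
    rw [Pi.add_apply]; push_cast; ring
  rw [this, mul_add]

lemma Bform_zero_left (Θ : Matrix (Fin n) (Fin n) ℝ) (m : Fin n → ℤ) :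
    Bform Θ 0 m = 0 := by
  unfold Bform
  have : (fun j => (((0 : Fin n → ℤ)) j : ℝ)) = 0 := by funext j; simp
  rw [this, Matrix.mulVec_zero]
  simp

lemma Bform_zero_right (Θ : Matrix (Fin n) (Fin n) ℝ) (m : Fin n → ℤ) :
    Bform Θ m 0 = 0 := by
  unfold Bform; simp

lemma Bform_single (Θ : Matrix (Fin n) (Fin n) ℝ) (a b : Fin n) :
    Bform Θ (Pi.single a 1) (Pi.single b 1) = Θ b a := by
  unfold Bform
  rw [cast_single, Matrix.mulVec_single]
  rw [Finset.sum_eq_single b]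
  · simp
  · intro i _ hib
    by_cases h : i = b <;> simp [Pi.single_apply, hib]
  · simp

lemma omegaTheta_cocycle (Θ : Matrix (Fin n) (Fin n) ℝ) (m l k : Fin n → ℤ) :
    omegaTheta n Θ m l * omegaTheta n Θ (m + l) k
      = omegaTheta n Θ m (l + k) * omegaTheta n Θ l k := by
  rw [omegaTheta_eq, omegaTheta_eq, omegaTheta_eq, omegaTheta_eq, ← Circle.exp_add,
    ← Circle.exp_add]
  congr 1
  rw [Bform_add_left, Bform_add_right]
  ring

lemma omegaTheta_zero_right (Θ : Matrix (Fin n) (Fin n) ℝ) (m : Fin n → ℤ) :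
    omegaTheta n Θ m 0 = 1 := by
  rw [omegaTheta_eq, Bform_zero_right, mul_zero, Circle.exp_zero]

lemma omegaTheta_zero_left (Θ : Matrix (Fin n) (Fin n) ℝ) (m : Fin n → ℤ) :
    omegaTheta n Θ 0 m = 1 := by
  rw [omegaTheta_eq, Bform_zero_left, mul_zero, Circle.exp_zero]

lemma omegaTheta_single (Θ : Matrix (Fin n) (Fin n) ℝ) (a b : Fin n) :
    omegaTheta n Θ (Pi.single a 1) (Pi.single b 1) = Circle.exp (2 * π * Θ b a) := by
  rw [omegaTheta_eq, Bform_single]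

lemma Bform_expand (Θ : Matrix (Fin n) (Fin n) ℝ) (m l : Fin n → ℤ) :
    Bform Θ m l = ∑ i, ∑ j, Θ i j * (m j : ℝ) * (l i : ℝ) := by
  unfold Bform
  refine Finset.sum_congr rfl fun i _ => ?_
  rw [Matrix.mulVec, dotProduct, Finset.sum_mul]

/-! ### The strictly upper triangular matrix attached to a cocycle -/

/-- The matrix of arguments of the antisymmetrization of `ω` at pairs of generators. -/
noncomputable def thetaOf (n : ℕ) (ω : (Fin n → ℤ) → (Fin n → ℤ) → Circle) :
    Matrix (Fin n) (Fin n) ℝ := fun i j =>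
  if i < j then
    Complex.arg ((ω (Pi.single j 1) (Pi.single i 1) / ω (Pi.single i 1) (Pi.single j 1)
      : Circle) : ℂ) / (2 * π)
  else 0

lemma thetaOf_strictUpper (ω : (Fin n → ℤ) → (Fin n → ℤ) → Circle) :
    StrictUpper n (thetaOf n ω) := fun i j hji => if_neg (not_lt.mpr hji)

lemma two_pi_ne_zero : (2 * π : ℝ) ≠ 0 := by positivity

lemma singles_match (ω : (Fin n → ℤ) → (Fin n → ℤ) → Circle) (a b : Fin n) :
    ω (Pi.single a 1) (Pi.single b 1) / ω (Pi.single b 1) (Pi.single a 1)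
      = omegaTheta n (thetaOf n ω) (Pi.single a 1) (Pi.single b 1) /
        omegaTheta n (thetaOf n ω) (Pi.single b 1) (Pi.single a 1) := by
  rw [omegaTheta_single, omegaTheta_single]
  rcases lt_trichotomy a b with hab | hab | hab
  · have h1 : thetaOf n ω b a = 0 := if_neg (not_lt.mpr hab.le)
    have h2 : thetaOf n ω a b
        = Complex.arg ((ω (Pi.single b 1) (Pi.single a 1) /
            ω (Pi.single a 1) (Pi.single b 1) : Circle) : ℂ) / (2 * π) :=
      if_pos hab
    rw [h1, h2, mul_zero, Circle.exp_zero, mul_div_cancel₀ _ two_pi_ne_zero,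
      Circle.exp_arg, one_div, inv_div]
  · subst hab
    rw [div_self', div_self']
  · have h1 : thetaOf n ω a b = 0 := if_neg (not_lt.mpr hab.le)
    have h2 : thetaOf n ω b a
        = Complex.arg ((ω (Pi.single a 1) (Pi.single b 1) /
            ω (Pi.single b 1) (Pi.single a 1) : Circle) : ℂ) / (2 * π) :=
      if_pos hab
    rw [h1, h2, mul_zero, Circle.exp_zero, mul_div_cancel₀ _ two_pi_ne_zero,
      Circle.exp_arg, div_one]

end Stmt12Aux

open Stmt12Aux in
/-- every `𝕋`-valued 2-cocycle on `ℤ^n` is cohomologous to one of the form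
`ω_Θ(m,l) = exp(2πi⟨Θm,l⟩)` with `Θ` strictly upper triangular; and `ω_Θ`, `ω_{Θ'}` are
cohomologous iff `Θ - Θ'` has integer entries. -/
theorem stmt_12 (n : ℕ) :
    (∀ ω : (Fin n → ℤ) → (Fin n → ℤ) → Circle, IsCocycle n ω →
      ∃ Θ : Matrix (Fin n) (Fin n) ℝ, StrictUpper n Θ ∧
        Cohomologous n ω (omegaTheta n Θ)) ∧
    (∀ Θ Θ' : Matrix (Fin n) (Fin n) ℝ, StrictUpper n Θ → StrictUpper n Θ' →
      (Cohomologous n (omegaTheta n Θ) (omegaTheta n Θ') ↔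
        ∀ i j : Fin n, ∃ k : ℤ, Θ i j - Θ' i j = (k : ℝ))) := by
  constructor
  · -- Part 1
    rintro ω ⟨hc, hn⟩
    set Θ := thetaOf n ω with hΘ
    set ω' : (Fin n → ℤ) → (Fin n → ℤ) → Circle :=
      fun m l => ω m l / omegaTheta n Θ m l with hω'
    have hc' : ∀ m l k, ω' m l * ω' (m + l) k = ω' m (l + k) * ω' l k := by
      intro m l k
      simp only [hω', div_mul_div_comm]
      rw [hc, omegaTheta_cocycle]
    have hn1' : ∀ m, ω' m 0 = 1 := by
      intro m
      simp only [hω', (hn m).1, omegaTheta_zero_right, div_one]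
    have hn2' : ∀ m, ω' 0 m = 1 := by
      intro m
      simp only [hω', (hn m).2, omegaTheta_zero_left, div_one]
    have hsingle' : ∀ a b : Fin n,
        ω' (Pi.single a 1) (Pi.single b 1) / ω' (Pi.single b 1) (Pi.single a 1) = 1 := by
      intro a b
      simp only [hω']
      rw [div_div_div_comm, singles_match ω a b, div_self']
    have hA2 := antisym_mul ω' hc'
    have hstep1 : ∀ (j : Fin n) (m : Fin n → ℤ),
        ω' (Pi.single j 1) m / ω' m (Pi.single j 1) = 1 := by
      intro j
      exact hom_eq_one (fun l => ω' (Pi.single j 1) l / ω' l (Pi.single j 1))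
        (fun a b => hA2 (Pi.single j 1) a b) (fun i => hsingle' j i)
    have hs' : ∀ m l, ω' m l = ω' l m := by
      intro m l
      have h := hom_eq_one (fun m => ω' m l / ω' l m) ?_ (fun j => hstep1 j l) m
      · exact div_eq_one.mp h
      · intro a b
        show ω' (a + b) l / ω' l (a + b) = ω' a l / ω' l a * (ω' b l / ω' l b)
        rw [← inv_div (ω' l (a + b)) (ω' (a + b) l), hA2 l a b, mul_inv,
          inv_div, inv_div]
    let d : SymCocycleAux n := ⟨ω', hc', hn1', hn2', hs'⟩
    refine ⟨Θ, thetaOf_strictUpper ω, fun m => (ExtAux.s (d := d) m).z⁻¹, fun m l => ?_⟩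
    have hco : ω' m l = (ExtAux.s (d := d) m).z⁻¹ * (ExtAux.s (d := d) l).z⁻¹ *
        (ExtAux.s (d := d) (m + l)).z := ExtAux.cobound (d := d) m l
    rw [inv_inv, ← hco]
    show ω m l = omegaTheta n Θ m l * (ω m l / omegaTheta n Θ m l)
    exact (mul_div_cancel _ _).symm
  · -- Part 2
    intro Θ Θ' hU hU'
    constructor
    · rintro ⟨b, hb⟩ i j
      by_cases hij : i < j
      · have h1 := hb (Pi.single j 1) (Pi.single i 1)
        have h2 := hb (Pi.single i 1) (Pi.single j 1)
        rw [omegaTheta_single, omegaTheta_single] at h1 h2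
        rw [hU j i hij.le, hU' j i hij.le, mul_zero, Circle.exp_zero, one_mul] at h2
        -- h2 : 1 = b eᵢ * b eⱼ * (b (eᵢ + eⱼ))⁻¹
        rw [mul_comm (b (Pi.single j 1)) (b (Pi.single i 1)),
          add_comm (Pi.single j 1) (Pi.single i 1), ← h2, mul_one] at h1
        obtain ⟨k, hk⟩ := Circle.exp_eq_exp.mp h1
        refine ⟨k, ?_⟩
        have : (2 * π) * (Θ i j - Θ' i j - k) = 0 := by linarith [hk]
        have h0 := mul_eq_zero.mp this
        rcases h0 with h0 | h0
        · exact absurd h0 two_pi_ne_zero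
        · linarith
      · exact ⟨0, by rw [hU i j (not_lt.mp hij), hU' i j (not_lt.mp hij)]; norm_num⟩
    · intro h
      choose K hK using h
      refine ⟨fun _ => 1, fun m l => ?_⟩
      have hBB : Bform Θ m l = Bform Θ' m l + ((∑ i, ∑ j, K i j * m j * l i : ℤ) : ℝ) := by
        rw [Bform_expand, Bform_expand]
        push_cast
        rw [← Finset.sum_add_distrib]
        refine Finset.sum_congr rfl fun i _ => ?_
        rw [← Finset.sum_add_distrib]
        refine Finset.sum_congr rfl fun j _ => ?_
        linear_combination ((m j : ℝ) * (l i : ℝ)) * hK i j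
      rw [omegaTheta_eq, omegaTheta_eq, hBB, mul_add, Circle.exp_add,
        Circle.exp_two_pi_mul_int, mul_one]
      simp
end

section
/- Let X be a compact Hausdorff space, A a unital C*-algebra containing C(X) in its center (making A a C(X)-algebra), and B ⊆ A a closed C(X)-invariant *-subalgebra such that for every x ∈ X the images of B and A in the fibre A_x = A/(C₀(X∖{x})·A) coincide. Then B = A. -/
set_option linter.unusedSectionVars false
set_option maxHeartbeats 1000000

section Aux

variable {X A : Type*} [TopologicalSpace X] [CompactSpace X] [T2Space X]
    [NormedRing A] [StarRing A] [CStarRing A] [NormedAlgebra ℂ A]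
    [CompleteSpace A] [StarModule ℂ A]

noncomputable def stmt18CStar (A : Type*) [NormedRing A] [StarRing A] [CStarRing A]
    [NormedAlgebra ℂ A] [CompleteSpace A] [StarModule ℂ A] : CStarAlgebra A :=
  { ‹NormedRing A›, ‹StarRing A›, ‹CStarRing A›, ‹NormedAlgebra ℂ A›, ‹CompleteSpace A›,
    ‹StarModule ℂ A› with }

lemma stmt18_phi_norm_le (Φ : C(X, ℂ) →⋆ₐ[ℂ] A) (g : C(X, ℂ)) : ‖Φ g‖ ≤ ‖g‖ := by
  letI : CStarAlgebra A := stmt18CStar A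
  exact NonUnitalStarAlgHom.norm_apply_le Φ g

lemma stmt18_span_control (Φ : C(X, ℂ) →⋆ₐ[ℂ] A) (x : X) {s : A}
    (hs : s ∈ Submodule.span ℂ {z : A | ∃ (f : C(X, ℂ)) (a' : A), f x = 0 ∧ z = Φ f * a'}) :
    ∀ δ : ℝ, 0 < δ → ∃ U : Set X, IsOpen U ∧ x ∈ U ∧
      ∀ g : C(X, ℂ), (∀ y, ‖g y‖ ≤ 1) → (∀ y ∉ U, g y = 0) → ‖Φ g * s‖ ≤ δ := by
  induction hs using Submodule.span_induction with
  | mem z hz =>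
    obtain ⟨f, a', hfx, rfl⟩ := hz
    intro δ hδ
    have hpos : 0 < δ / (‖a'‖ + 1) := by positivity
    refine ⟨{y | ‖f y‖ < δ / (‖a'‖ + 1)}, isOpen_lt (map_continuous f).norm continuous_const,
      by simpa [hfx] using hpos, fun g hg1 hg0 => ?_⟩
    have hgf : ‖g * f‖ ≤ δ / (‖a'‖ + 1) := by
      rw [ContinuousMap.norm_le _ hpos.le]
      intro y
      by_cases hy : y ∈ {y | ‖f y‖ < δ / (‖a'‖ + 1)}
      · calc ‖(g * f) y‖ = ‖g y‖ * ‖f y‖ := by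
              simp [ContinuousMap.mul_apply]
        _ ≤ 1 * ‖f y‖ := mul_le_mul_of_nonneg_right (hg1 y) (norm_nonneg _)
        _ ≤ δ / (‖a'‖ + 1) := by rw [one_mul]; exact le_of_lt hy
      · simp [ContinuousMap.mul_apply, hg0 y hy, hpos.le]
    calc ‖Φ g * (Φ f * a')‖ = ‖Φ (g * f) * a'‖ := by rw [← mul_assoc, ← map_mul]
      _ ≤ ‖Φ (g * f)‖ * ‖a'‖ := norm_mul_le _ _
      _ ≤ (δ / (‖a'‖ + 1)) * ‖a'‖ :=
          mul_le_mul_of_nonneg_right ((stmt18_phi_norm_le Φ _).trans hgf) (norm_nonneg _)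
      _ ≤ δ := by
          rw [div_mul_eq_mul_div, div_le_iff₀ (by positivity)]
          nlinarith [norm_nonneg a']
  | zero =>
    intro δ hδ
    exact ⟨Set.univ, isOpen_univ, trivial, fun g _ _ => by simp [hδ.le]⟩
  | add u v hu hv ihu ihv =>
    intro δ hδ
    obtain ⟨U₁, hU₁o, hxU₁, hU₁⟩ := ihu (δ / 2) (by linarith)
    obtain ⟨U₂, hU₂o, hxU₂, hU₂⟩ := ihv (δ / 2) (by linarith)
    refine ⟨U₁ ∩ U₂, hU₁o.inter hU₂o, ⟨hxU₁, hxU₂⟩, fun g hg1 hg0 => ?_⟩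
    have h1 := hU₁ g hg1 (fun y hy => hg0 y (fun h => hy h.1))
    have h2 := hU₂ g hg1 (fun y hy => hg0 y (fun h => hy h.2))
    calc ‖Φ g * (u + v)‖ = ‖Φ g * u + Φ g * v‖ := by rw [mul_add]
      _ ≤ ‖Φ g * u‖ + ‖Φ g * v‖ := norm_add_le _ _
      _ ≤ δ := by linarith
  | smul c u hu ihu =>
    intro δ hδ
    obtain ⟨U, hUo, hxU, hU⟩ := ihu (δ / (‖c‖ + 1)) (by positivity)
    refine ⟨U, hUo, hxU, fun g hg1 hg0 => ?_⟩
    calc ‖Φ g * (c • u)‖ = ‖c‖ * ‖Φ g * u‖ := by rw [mul_smul_comm, norm_smul]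
      _ ≤ ‖c‖ * (δ / (‖c‖ + 1)) := by
          exact mul_le_mul_of_nonneg_left (hU g hg1 hg0) (norm_nonneg _)
      _ ≤ δ := by
          rw [mul_div_assoc', div_le_iff₀ (by positivity)]
          nlinarith [norm_nonneg c]

lemma stmt18_normBound [Nontrivial A] (Φ : C(X, ℂ) →⋆ₐ[ℂ] A)
    (hcentral : ∀ (f : C(X, ℂ)) (a : A), Φ f * a = a * Φ f) (d : A) {M : ℝ} (hM : 0 ≤ M)
    (hloc : ∀ x : X, ∃ V : Set X, IsOpen V ∧ x ∈ V ∧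
      ∀ g : C(X, ℂ), (∀ y, ‖g y‖ ≤ 1) → (∀ y ∉ V, g y = 0) → ‖Φ g * d‖ ≤ M) :
    ‖d‖ ≤ M := by
  haveI : IsSemitopologicalSemiring A := inferInstance
  haveI : IsSemitopologicalRing A := inferInstance
  letI : CStarAlgebra A := stmt18CStar A
  set t : A := star d * d with htdef
  have hcomm : ∀ u ∈ insert t (Set.range ⇑Φ), ∀ v ∈ insert t (Set.range ⇑Φ), u * v = v * u := by
    rintro u hu v hv
    rcases Set.mem_insert_iff.mp hu with rfl | ⟨f, rfl⟩ <;>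
      rcases Set.mem_insert_iff.mp hv with rfl | ⟨f', rfl⟩
    · rfl
    · exact (hcentral f' _).symm
    · exact hcentral f _
    · exact hcentral f _
  letI : CommRing (Algebra.adjoin ℂ (insert t (Set.range ⇑Φ))) :=
    Algebra.adjoinCommRingOfComm ℂ hcomm
  set C : Subalgebra ℂ A := (Algebra.adjoin ℂ (insert t (Set.range ⇑Φ))).topologicalClosure
    with hCdef
  letI : CommRing ↥C := Subalgebra.commRingTopologicalClosure _ fun x y => mul_comm x y
  letI : NormedCommRing ↥C := { (inferInstance : NormedRing ↥C) with mul_comm := mul_comm }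
  haveI : CompleteSpace ↥C := (Subalgebra.isClosed_topologicalClosure _).completeSpace_coe
  haveI : NormOneClass ↥C := ⟨show ‖((1 : ↥C) : A)‖ = 1 from by rw [OneMemClass.coe_one, norm_one]⟩
  have htC : t ∈ C :=
    Subalgebra.le_topologicalClosure _ (Algebra.subset_adjoin (Set.mem_insert _ _))
  have hΦC : ∀ f : C(X, ℂ), Φ f ∈ C := fun f =>
    Subalgebra.le_topologicalClosure _
      (Algebra.subset_adjoin (Set.mem_insert_iff.mpr (Or.inr ⟨f, rfl⟩)))
  set Φ' : C(X, ℂ) →ₐ[ℂ] ↥C := (Φ.toAlgHom).codRestrict C hΦC with hΦ'def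
  set tC : ↥C := ⟨t, htC⟩ with htCdef
  -- spectrum bound
  have hspec : ∀ z ∈ spectrum ℂ t, ‖z‖ ≤ M * M := by
    intro z hz
    have hz' : z ∈ spectrum ℂ tC := spectrum.subset_subalgebra tC hz
    obtain ⟨φ, hφ⟩ := WeakDual.CharacterSpace.mem_spectrum_iff_exists.mp hz'
    set ψ : C(X, ℂ) →ₐ[ℂ] ℂ := (WeakDual.CharacterSpace.equivAlgHom φ).comp Φ' with hψdef
    set χ := WeakDual.CharacterSpace.equivAlgHom.symm ψ with hχdef
    set x₀ : X := (WeakDual.CharacterSpace.homeoEval X ℂ).symm χ with hx₀def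
    have hx₀ : ∀ g : C(X, ℂ), φ (Φ' g) = g x₀ := by
      intro g
      have h1 : (WeakDual.CharacterSpace.homeoEval X ℂ) x₀ = χ :=
        Homeomorph.apply_symm_apply _ _
      have h2 : ((WeakDual.CharacterSpace.homeoEval X ℂ) x₀) g = g x₀ := rfl
      rw [h1] at h2
      have h3 : χ g = ψ g := congrFun (WeakDual.CharacterSpace.equivAlgHom_symm_coe ψ) g
      have h4 : ψ g = φ (Φ' g) := rfl
      rw [← h4, ← h3, h2]
    obtain ⟨V, hVopen, hxV, hVest⟩ := hloc x₀
    obtain ⟨gR, hg0, hg1, hgIcc⟩ := exists_continuous_zero_one_of_isClosed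
      hVopen.isClosed_compl isClosed_singleton
      (Set.disjoint_singleton_right.mpr (by simpa using hxV))
    set gC : C(X, ℂ) := (⟨Complex.ofReal, Complex.continuous_ofReal⟩ : C(ℝ, ℂ)).comp gR
      with hgCdef
    have hb1 : ∀ y, ‖gC y‖ ≤ 1 := by
      intro y
      have := hgIcc y
      simp only [hgCdef, ContinuousMap.comp_apply, ContinuousMap.coe_mk, Complex.norm_real]
      rw [Real.norm_eq_abs, abs_le]
      constructor <;> [linarith [this.1]; linarith [this.2]]
    have hb0 : ∀ y ∉ V, gC y = 0 := by
      intro y hy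
      simp only [hgCdef, ContinuousMap.comp_apply, ContinuousMap.coe_mk]
      rw [hg0 hy]
      simp
    have hgx₀ : gC x₀ = 1 := by
      simp only [hgCdef, ContinuousMap.comp_apply, ContinuousMap.coe_mk]
      rw [hg1 rfl]
      simp
    have hstar : star gC = gC := by
      ext y
      simp [hgCdef, Complex.conj_ofReal]
    set u : ↥C := Φ' gC with hudef
    have hu1 : φ u = 1 := by rw [hudef, hx₀, hgx₀]
    have hz2 : z = φ (u * (u * tC)) := by
      rw [map_mul, map_mul, hu1, hφ, one_mul, one_mul]
    have hucoe : ((u : ↥C) : A) = Φ gC := rfl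
    have hcoe : ((u * (u * tC) : ↥C) : A) = Φ gC * (Φ gC * t) := rfl
    have hyy : Φ gC * (Φ gC * t) = star (Φ gC * d) * (Φ gC * d) := by
      have h1 : star (Φ gC) = Φ gC := by rw [← map_star, hstar]
      have hswap : ∀ w : A, star d * (Φ gC * w) = Φ gC * (star d * w) := fun w => by
        rw [← mul_assoc, ← hcentral, mul_assoc]
      calc Φ gC * (Φ gC * t)
          = Φ gC * (Φ gC * (star d * d)) := rfl
        _ = Φ gC * (star d * (Φ gC * d)) := by rw [hswap d]
        _ = star d * (Φ gC * (Φ gC * d)) := by rw [hswap (Φ gC * d)]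
        _ = star d * Φ gC * (Φ gC * d) := by rw [mul_assoc]
        _ = star d * star (Φ gC) * (Φ gC * d) := by rw [h1]
        _ = star (Φ gC * d) * (Φ gC * d) := by rw [star_mul]
    have hnorm : ‖(u * (u * tC) : ↥C)‖ = ‖Φ gC * d‖ * ‖Φ gC * d‖ := by
      rw [show ‖(u * (u * tC) : ↥C)‖ = ‖((u * (u * tC) : ↥C) : A)‖ from rfl, hcoe, hyy]
      exact CStarRing.norm_star_mul_self
    have hzle : ‖z‖ ≤ ‖(u * (u * tC) : ↥C)‖ := by
      rw [hz2]
      exact spectrum.norm_le_norm_of_mem (AlgHom.apply_mem_spectrum φ _)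
    have hyM : ‖Φ gC * d‖ ≤ M := hVest gC hb1 hb0
    calc ‖z‖ ≤ ‖(u * (u * tC) : ↥C)‖ := hzle
      _ = ‖Φ gC * d‖ * ‖Φ gC * d‖ := hnorm
      _ ≤ M * M := mul_le_mul hyM hyM (norm_nonneg _) hM
  -- conclude from spectral radius
  have hsa : IsSelfAdjoint t := IsSelfAdjoint.star_mul_self d
  have h1 : spectralRadius ℂ t ≤ ENNReal.ofReal (M * M) := by
    have hdef : spectralRadius ℂ t = ⨆ k ∈ spectrum ℂ t, (‖k‖₊ : ENNReal) := rfl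
    rw [hdef]
    refine iSup₂_le fun k hk => ?_
    rw [show (‖k‖₊ : ENNReal) = ENNReal.ofReal ‖k‖ from (ofReal_norm k).symm]
    exact ENNReal.ofReal_le_ofReal (hspec k hk)
  rw [show spectralRadius ℂ t = ‖t‖₊ from hsa.spectralRadius_eq_nnnorm] at h1
  have h2 : ‖t‖ ≤ M * M := by
    have h3 := ENNReal.toReal_mono (by simp) h1
    simp [ENNReal.toReal_ofReal (by positivity : (0:ℝ) ≤ M * M)] at h3
    exact h3
  have h4 : ‖d‖ * ‖d‖ ≤ M * M := by
    rw [show ‖d‖ * ‖d‖ = ‖star d * d‖ from CStarRing.norm_star_mul_self.symm]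
    exact h2
  nlinarith [norm_nonneg d]

end Aux

/-- let `X` be compact Hausdorff, `A` a unital C*-algebra containing `C(X)` in
its centre (via a unital *-homomorphism `Φ : C(X) → A` with central range), and `B ⊆ A` a
closed `C(X)`-invariant *-subalgebra such that for every `x ∈ X` the images of `B` and `A` in
the fibre `A_x = A/(C₀(X∖{x})·A)` coincide (i.e. every `a ∈ A` agrees with some `b ∈ B`
modulo the closed ideal `I_x` generated by `{Φ(f)a : f(x) = 0}`).  Then `B = A`. -/
theorem stmt_18 (X A : Type*) [TopologicalSpace X] [CompactSpace X] [T2Space X]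
    [NormedRing A] [StarRing A] [CStarRing A] [NormedAlgebra ℂ A]
    [CompleteSpace A] [StarModule ℂ A]
    (Φ : C(X, ℂ) →⋆ₐ[ℂ] A)
    (hcentral : ∀ (f : C(X, ℂ)) (a : A), Φ f * a = a * Φ f)
    (B : StarSubalgebra ℂ A) (hBclosed : IsClosed (B : Set A))
    (hBinv : ∀ (f : C(X, ℂ)) (b : A), b ∈ B → Φ f * b ∈ B)
    (hfibre : ∀ (x : X) (a : A), ∃ b ∈ B, a - b ∈
      closure ((Submodule.span ℂ
        {z : A | ∃ (f : C(X, ℂ)) (a' : A), f x = 0 ∧ z = Φ f * a'} : Submodule ℂ A) : Set A)) :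
    ∀ a : A, a ∈ B := by
  classical
  intro a
  by_cases htriv : (1 : A) = 0
  · have ha0 : a = 0 := by rw [← mul_one a, htriv, mul_zero]
    rw [ha0]; exact zero_mem B
  haveI : Nontrivial A := nontrivial_of_ne 1 0 htriv
  have happrox : ∀ ε : ℝ, 0 < ε → ∃ b ∈ (B : Set A), dist a b < ε := by
    intro ε hε
    -- Step 1: local approximants
    have hstep1 : ∀ x : X, ∃ (b : A) (U : Set X), b ∈ B ∧ IsOpen U ∧ x ∈ U ∧
        ∀ g : C(X, ℂ), (∀ y, ‖g y‖ ≤ 1) → (∀ y ∉ U, g y = 0) → ‖Φ g * (a - b)‖ ≤ ε / 3 := by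
      intro x
      obtain ⟨b, hbB, hbc⟩ := hfibre x a
      obtain ⟨s, hsmem, hsdist⟩ := Metric.mem_closure_iff.mp hbc (ε / 6) (by linarith)
      obtain ⟨U, hUo, hxU, hUest⟩ :=
        stmt18_span_control Φ x (SetLike.mem_coe.mp hsmem) (ε / 6) (by linarith)
      refine ⟨b, U, hbB, hUo, hxU, fun g hg1 hg0 => ?_⟩
      have hgn : ‖g‖ ≤ 1 := (ContinuousMap.norm_le _ zero_le_one).mpr hg1
      have hdist : ‖(a - b) - s‖ ≤ ε / 6 := by
        rw [← dist_eq_norm]; exact hsdist.le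
      have hsplit : Φ g * (a - b) = Φ g * ((a - b) - s) + Φ g * s := by
        rw [← mul_add, sub_add_cancel]
      calc ‖Φ g * (a - b)‖ = ‖Φ g * ((a - b) - s) + Φ g * s‖ := by rw [hsplit]
        _ ≤ ‖Φ g * ((a - b) - s)‖ + ‖Φ g * s‖ := norm_add_le _ _
        _ ≤ ‖Φ g‖ * ‖(a - b) - s‖ + ε / 6 :=
            add_le_add (norm_mul_le _ _) (hUest g hg1 hg0)
        _ ≤ 1 * (ε / 6) + ε / 6 :=
            add_le_add_left
              (mul_le_mul ((stmt18_phi_norm_le Φ g).trans hgn) hdist (norm_nonneg _)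
                zero_le_one) _
        _ ≤ ε / 3 := by linarith
    choose bfun Ufun hbB hUo hxU hUest using hstep1
    obtain ⟨τ, hτ⟩ := IsCompact.elim_finite_subcover isCompact_univ Ufun hUo
      (fun x _ => Set.mem_iUnion.mpr ⟨x, hxU x⟩)
    obtain ⟨p, hp⟩ := PartitionOfUnity.exists_isSubordinate (s := Set.univ) isClosed_univ
      (fun i : {y // y ∈ τ} => Ufun ↑i) (fun i => hUo ↑i)
      (by
        intro y _
        have := hτ (Set.mem_univ y)
        simp only [Set.mem_iUnion] at this ⊢
        obtain ⟨x, hxτ, hyx⟩ := this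
        exact ⟨⟨x, hxτ⟩, hyx⟩)
    set cR : C(ℝ, ℂ) := ⟨Complex.ofReal, Complex.continuous_ofReal⟩ with hcR
    set gc : {y // y ∈ τ} → C(X, ℂ) := fun i => cR.comp (p i) with hgc
    set cc : {y // y ∈ τ} → A := fun i => a - bfun ↑i with hcc
    have hsum1 : ∀ y : X, ∑ i : {y // y ∈ τ}, p i y = 1 := fun y => by
      rw [← finsum_eq_sum_of_fintype]; exact p.sum_eq_one (Set.mem_univ y)
    have hgc_sum : (∑ i : {y // y ∈ τ}, gc i) = 1 := by
      ext y
      simp only [ContinuousMap.coe_sum, Finset.sum_apply, hgc, ContinuousMap.comp_apply,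
        ContinuousMap.coe_mk, hcR, ContinuousMap.one_apply]
      rw [← Complex.ofReal_sum, hsum1 y, Complex.ofReal_one]
    set b : A := ∑ i : {y // y ∈ τ}, Φ (gc i) * bfun ↑i with hb
    have hbmem : b ∈ B := sum_mem fun i _ => hBinv _ _ (hbB ↑i)
    have hd : a - b = ∑ i : {y // y ∈ τ}, Φ (gc i) * cc i := by
      have h1 : (∑ i : {y // y ∈ τ}, Φ (gc i)) * a = a := by
        rw [← map_sum, hgc_sum, map_one, one_mul]
      calc a - b = (∑ i : {y // y ∈ τ}, Φ (gc i)) * a - ∑ i : {y // y ∈ τ}, Φ (gc i) * bfun ↑i := by rw [h1, hb]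
        _ = ∑ i : {y // y ∈ τ}, (Φ (gc i) * a - Φ (gc i) * bfun ↑i) := by
            rw [Finset.sum_mul, ← Finset.sum_sub_distrib]
        _ = ∑ i : {y // y ∈ τ}, Φ (gc i) * cc i := by
            refine Finset.sum_congr rfl fun i _ => ?_
            rw [hcc, mul_sub]
    -- local estimate for d = a - b
    have hloc : ∀ x : X, ∃ V : Set X, IsOpen V ∧ x ∈ V ∧
        ∀ g : C(X, ℂ), (∀ y, ‖g y‖ ≤ 1) → (∀ y ∉ V, g y = 0) →
          ‖Φ g * (a - b)‖ ≤ 2 * ε / 3 := by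
      intro x
      set n : ℕ := Fintype.card {y // y ∈ τ} with hn
      set δ' : ℝ := ε / (3 * (n + 1)) with hδ'
      have hδ'pos : 0 < δ' := by positivity
      set W : {y // y ∈ τ} → Set X := fun i => {y | ‖p i y - p i x‖ < δ' / (‖cc i‖ + 1)} with hW
      have hWo : ∀ i, IsOpen (W i) := fun i =>
        isOpen_lt (((p i).continuous.sub continuous_const).norm) continuous_const
      set F : Finset {y // y ∈ τ} := Finset.univ.filter fun i => p i x ≠ 0 with hF
      set V : Set X := (⋂ i ∈ F, Ufun ↑i) ∩ ⋂ i ∈ (Finset.univ : Finset {y // y ∈ τ}), W i with hV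
      have hVo : IsOpen V := by
        rw [hV]
        exact (isOpen_biInter_finset (s := F) (f := fun i => Ufun ↑i)
            (fun i _ => hUo ↑i)).inter
          (isOpen_biInter_finset (s := (Finset.univ : Finset {y // y ∈ τ})) (f := W)
            (fun i _ => hWo i))
      have hxV : x ∈ V := by
        constructor
        · refine Set.mem_iInter₂.mpr fun i hi => ?_
          have hpx : p i x ≠ 0 := by simpa [hF] using hi
          exact hp i (subset_tsupport _ (Function.mem_support.mpr hpx))
        · refine Set.mem_iInter₂.mpr fun i _ => ?_
          simp only [hW, Set.mem_setOf_eq, sub_self, norm_zero]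
          positivity
      have hVU : ∀ i ∈ F, V ⊆ Ufun ↑i := fun i hi =>
        Set.inter_subset_left.trans (Set.biInter_subset_of_mem hi)
      have hVW : ∀ i, V ⊆ W i := fun i =>
        Set.inter_subset_right.trans (Set.biInter_subset_of_mem (Finset.mem_univ i))
      refine ⟨V, hVo, hxV, fun g hg1 hg0 => ?_⟩
      set hsub : {y // y ∈ τ} → C(X, ℂ) := fun i => gc i - (p i x : ℂ) • 1 with hhsub
      have hterm : ∀ i, Φ g * (Φ (gc i) * cc i) =
          (p i x : ℂ) • (Φ g * cc i) + Φ (g * hsub i) * cc i := by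
        intro i
        have h2 : Φ (g * hsub i) = Φ g * Φ (gc i) - (p i x : ℂ) • Φ g := by
          rw [hhsub, mul_sub, map_sub, map_mul, mul_smul_comm, mul_one, map_smul]
        rw [h2, sub_mul, smul_mul_assoc, ← mul_assoc]
        abel
      have hdecomp : Φ g * (a - b) =
          (∑ i : {y // y ∈ τ}, (p i x : ℂ) • (Φ g * cc i)) + ∑ i : {y // y ∈ τ}, Φ (g * hsub i) * cc i := by
        rw [hd, Finset.mul_sum]
        rw [← Finset.sum_add_distrib]
        exact Finset.sum_congr rfl fun i _ => hterm i
      have hbound1 : ‖∑ i : {y // y ∈ τ}, (p i x : ℂ) • (Φ g * cc i)‖ ≤ ε / 3 := by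
        calc ‖∑ i : {y // y ∈ τ}, (p i x : ℂ) • (Φ g * cc i)‖
            ≤ ∑ i : {y // y ∈ τ}, ‖(p i x : ℂ) • (Φ g * cc i)‖ := norm_sum_le _ _
          _ ≤ ∑ i : {y // y ∈ τ}, p i x * (ε / 3) := by
              refine Finset.sum_le_sum fun i _ => ?_
              rw [norm_smul, Complex.norm_real, Real.norm_eq_abs,
                abs_of_nonneg (p.nonneg i x)]
              by_cases hpx : p i x = 0
              · simp [hpx]
              · refine mul_le_mul_of_nonneg_left ?_ (p.nonneg i x)
                refine hUest ↑i g hg1 fun y hy => hg0 y fun hyV => hy ?_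
                exact hVU i (by simp [hF, hpx]) hyV
          _ = ε / 3 := by
              rw [← Finset.sum_mul, hsum1 x, one_mul]
      have hbound2 : ‖∑ i : {y // y ∈ τ}, Φ (g * hsub i) * cc i‖ ≤ ε / 3 := by
        have hterm2 : ∀ i : {y // y ∈ τ}, ‖Φ (g * hsub i) * cc i‖ ≤ δ' := by
          intro i
          have hnm : ‖g * hsub i‖ ≤ δ' / (‖cc i‖ + 1) := by
            rw [ContinuousMap.norm_le _ (by positivity)]
            intro y
            by_cases hy : y ∈ W i
            · have hval : (g * hsub i) y = g y * ((p i y : ℂ) - (p i x : ℂ)) := by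
                simp [hhsub, hgc, hcR]
              rw [hval, norm_mul, ← Complex.ofReal_sub, Complex.norm_real]
              calc ‖g y‖ * ‖(p i y - p i x : ℝ)‖ ≤ 1 * ‖(p i y - p i x : ℝ)‖ :=
                    mul_le_mul_of_nonneg_right (hg1 y) (norm_nonneg _)
                _ ≤ δ' / (‖cc i‖ + 1) := by rw [one_mul]; exact le_of_lt hy
            · have : g y = 0 := hg0 y fun hyV => hy (hVW i hyV)
              simp [ContinuousMap.mul_apply, this]
              positivity
          calc ‖Φ (g * hsub i) * cc i‖ ≤ ‖Φ (g * hsub i)‖ * ‖cc i‖ := norm_mul_le _ _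
            _ ≤ (δ' / (‖cc i‖ + 1)) * ‖cc i‖ := by
                gcongr
                exact (stmt18_phi_norm_le Φ _).trans hnm
            _ ≤ δ' := by
                rw [div_mul_eq_mul_div, div_le_iff₀ (by positivity)]
                nlinarith [norm_nonneg (cc i)]
        calc ‖∑ i : {y // y ∈ τ}, Φ (g * hsub i) * cc i‖ ≤ ∑ i : {y // y ∈ τ}, ‖Φ (g * hsub i) * cc i‖ :=
              norm_sum_le _ _
          _ ≤ ∑ _i : {y // y ∈ τ}, δ' := Finset.sum_le_sum fun i _ => hterm2 i
          _ = n * δ' := by rw [Finset.sum_const, Finset.card_univ, nsmul_eq_mul, hn]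
          _ ≤ ε / 3 := by
              rw [hδ', mul_div_assoc', div_le_div_iff₀ (by positivity) (by norm_num)]
              have hn0 : (0:ℝ) ≤ (n:ℝ) := Nat.cast_nonneg n
              nlinarith
      calc ‖Φ g * (a - b)‖ ≤ ‖∑ i : {y // y ∈ τ}, (p i x : ℂ) • (Φ g * cc i)‖ +
            ‖∑ i : {y // y ∈ τ}, Φ (g * hsub i) * cc i‖ := by rw [hdecomp]; exact norm_add_le _ _
        _ ≤ 2 * ε / 3 := by linarith
    have hnb : ‖a - b‖ ≤ 2 * ε / 3 :=
      stmt18_normBound Φ hcentral (a - b) (by positivity) hloc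
    exact ⟨b, hbmem, by rw [dist_eq_norm]; linarith⟩
  have hcl : a ∈ closure (B : Set A) := Metric.mem_closure_iff.mpr happrox
  rwa [hBclosed.closure_eq] at hcl
end
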